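/- Let t ≥ 1 and let σ : Fin t → Bool be a truth assignment to variables x_0, ..., x_{t−1}. For each i, consider the two-literal clause (x_i ∨ ¬x_{i+1 mod t}). Then σ makes exactly one literal true in every one of these t clauses if and only if σ is constant, i.e., σ(i) = σ(j) for all i, j. -/

import Mathlib

/-- The cyclic equivalence gadget for `(2,1)`-1-in-3-SAT.  Let `t ≥ 1` (here `t + 1` with
`t : ℕ` arbitrary) and let `σ` be a truth assignment to the variables `x_0, …, x_t`.
For each index `i`, consider the two-literal clause `(x_i ∨ ¬x_{i+1 mod (t+1)})`.
Then `σ` makes exactly one literal true in every one of these clauses if and only if `σ`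
is constant. -/
theorem cyclic_clauses_one_in_three_iff_constant (t : ℕ) (σ : Fin (t + 1) → Bool) :
    (∀ i : Fin (t + 1), Xor' (σ i = true) (σ (i + 1) = false)) ↔
      ∀ i j : Fin (t + 1), σ i = σ j := by
  constructor
  · intro h
    have step : ∀ i : Fin (t + 1), σ i = σ (i + 1) := by
      intro i
      rcases h i with ⟨h1, h2⟩ | ⟨h1, h2⟩
      · simp only [Bool.not_eq_false] at h2; rw [h1, h2]
      · simp only [Bool.not_eq_true] at h2; rw [h1, h2]
    open Fin.NatCast in
    have key : ∀ (k : ℕ) (i : Fin (t + 1)), σ (i + (k : Fin (t + 1))) = σ i := by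
      intro k
      induction k with
      | zero => intro i; simp
      | succ n ih =>
        intro i
        have : ((n + 1 : ℕ) : Fin (t + 1)) = (n : Fin (t + 1)) + 1 := by
          push_cast; ring
        rw [this, ← add_assoc, ← step (i + (n : Fin (t + 1))), ih]
    intro i j
    have := key ((j - i : Fin (t + 1)) : ℕ) i
    rw [Fin.cast_val_eq_self, add_sub_cancel] at this; exact this.symm
  · intro h i
    have := h i (i + 1)
    rcases hb : σ i with _ | _ <;> simp_all [Xor']
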